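/- Let T > 0, m > 0, and let Ψ₁, Ψ₂ : [0,∞)×[0,T] → ℂ be continuously differentiable and satisfy i ∂ₜΨ₁ = −i ∂ₓΨ₁ + m Ψ₂ and i ∂ₜΨ₂ = i ∂ₓΨ₂ + m Ψ₁. Assume that Ψₗ(·,s), ∂ₓΨₗ(·,s) and ∂ₜΨₗ(·,s) are integrable on [0,∞) for each s ∈ [0,T], that Ψₗ(x,s) → 0 as x → +∞ for each s, and that |∂ₜΨₗ(x,s)| is dominated, uniformly for s ∈ [0,T], by an integrable function of x (l = 1,2). For real k and s ∈ [0,T] write Ψ̂ₗ(k,s) = ∫_0^∞ e^{−ikx} Ψₗ(x,s) dx and h₀,ₗ(Ω,t) = ∫_0^t e^{Ωs} Ψₗ(0,s) ds. Then for every k ∈ ℝ, every Ω ∈ ℂ with Ω² = −(k²+m²), and every t ∈ [0,T]: (ik − Ω) e^{Ωt} Ψ̂₂(k,t) + i m h₀,₁(Ω,t) − i m e^{Ωt} Ψ̂₁(k,t) + i m Ψ̂₁(k,0) + (Ω − ik) Ψ̂₂(k,0) + (ik − Ω) h₀,₂(Ω,t) = 0. -/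

import Mathlib

open MeasureTheory Filter intervalIntegral

lemma hasDerivAt_cexp_mul (c : ℂ) (x : ℝ) :
    HasDerivAt (fun y : ℝ => Complex.exp (c * y)) (c * Complex.exp (c * x)) x := by
  have h0 : HasDerivAt (fun y : ℝ => (y : ℂ)) 1 x := Complex.ofRealCLM.hasDerivAt
  simpa [mul_comm] using ((h0.const_mul c).cexp)

lemma hnorm1 (k x : ℝ) : ‖Complex.exp (-Complex.I * k * x)‖ = 1 := by
  rw [Complex.norm_exp]
  simp [Complex.mul_re]

lemma hEcont (k : ℝ) : Continuous fun x : ℝ => Complex.exp (-Complex.I * k * x) :=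
  Complex.continuous_exp.comp (by continuity)

lemma ibp_halfline (k : ℝ) (f f' : ℝ → ℂ)
    (hd : ∀ x ∈ Set.Ici (0:ℝ), HasDerivWithinAt f (f' x) (Set.Ici 0) x)
    (hf'c : ContinuousOn f' (Set.Ici 0))
    (hfi : IntegrableOn f (Set.Ici 0)) (hf'i : IntegrableOn f' (Set.Ici 0))
    (hdec : Tendsto f atTop (nhds 0)) :
    ∫ x in Set.Ici (0:ℝ), Complex.exp (-Complex.I * k * x) * f' x
      = -f 0 + Complex.I * k * ∫ x in Set.Ici (0:ℝ), Complex.exp (-Complex.I * k * x) * f x := by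
  set c : ℂ := -Complex.I * k with hc
  have hnorm : ∀ x : ℝ, ‖Complex.exp (c * x)‖ = 1 := fun x => hnorm1 k x
  have hfc : ContinuousOn f (Set.Ici 0) := fun x hx => (hd x hx).continuousWithinAt
  have hEc : Continuous fun x : ℝ => Complex.exp (c * x) :=
    (Complex.continuous_exp.comp (by continuity))
  set p : ℝ → ℂ := fun x => c * Complex.exp (c * ↑x) * f x + Complex.exp (c * ↑x) * f' x with hp
  have hpc : ContinuousOn p (Set.Ici 0) := by
    apply ContinuousOn.add
    · exact ((continuous_const.mul hEc).continuousOn.mul hfc)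
    · exact (hEc.continuousOn.mul hf'c)
  have step1 : ∀ X : ℝ, 0 ≤ X →
      ∫ x in (0:ℝ)..X, p x = Complex.exp (c * X) * f X - Complex.exp (c * 0) * f 0 := by
    intro X hX
    apply intervalIntegral.integral_eq_sub_of_hasDeriv_right_of_le hX
    · exact (hEc.continuousOn.mul (hfc.mono (Set.Icc_subset_Ici_self)))
    · intro x hx
      have hx0 : (0:ℝ) < x := hx.1
      have hfd : HasDerivAt f (f' x) x :=
        (hd x hx0.le).hasDerivAt (Ici_mem_nhds hx0)
      exact ((hasDerivAt_cexp_mul c x).mul hfd).hasDerivWithinAt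
    · exact ((hpc.mono Set.Icc_subset_Ici_self).intervalIntegrable_of_Icc hX)
  have hint1 : IntegrableOn (fun x : ℝ => c * Complex.exp (c * ↑x) * f x) (Set.Ici 0) := by
    apply hfi.bdd_mul ((continuous_const.mul hEc).aestronglyMeasurable)
    exact ae_of_all _ fun x => le_of_eq (by rw [Pi.mul_apply, norm_mul, hnorm x, mul_one])
  have hint2 : IntegrableOn (fun x : ℝ => Complex.exp (c * ↑x) * f' x) (Set.Ici 0) := by
    apply hf'i.bdd_mul hEc.aestronglyMeasurable
    exact ae_of_all _ fun x => le_of_eq (hnorm x)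
  have hpi : IntegrableOn p (Set.Ici 0) := hint1.add hint2
  have tend1 : Tendsto (fun X => ∫ x in (0:ℝ)..X, p x) atTop
      (nhds (∫ x in Set.Ioi (0:ℝ), p x)) :=
    intervalIntegral_tendsto_integral_Ioi 0 (hpi.mono_set Set.Ioi_subset_Ici_self) tendsto_id
  have tend2 : Tendsto (fun X : ℝ => Complex.exp (c * X) * f X - Complex.exp (c * 0) * f 0) atTop
      (nhds (0 - Complex.exp (c * 0) * f 0)) := by
    apply Tendsto.sub_const
    rw [tendsto_zero_iff_norm_tendsto_zero]
    have h : ∀ X : ℝ, ‖Complex.exp (c * X) * f X‖ = ‖f X‖ := by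
      intro X; rw [norm_mul, hnorm X, one_mul]
    simp only [h]
    exact (tendsto_zero_iff_norm_tendsto_zero.mp hdec)
  have key : ∫ x in Set.Ioi (0:ℝ), p x = 0 - Complex.exp (c * 0) * f 0 :=
    tendsto_nhds_unique
      (tend1.congr' (by filter_upwards [eventually_ge_atTop (0:ℝ)] with X hX using step1 X hX))
      tend2
  rw [← MeasureTheory.integral_Ici_eq_integral_Ioi] at key
  have split : ∫ x in Set.Ici (0:ℝ), p x
      = c * (∫ x in Set.Ici (0:ℝ), Complex.exp (c * ↑x) * f x)
        + ∫ x in Set.Ici (0:ℝ), Complex.exp (c * ↑x) * f' x := by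
    rw [MeasureTheory.integral_add hint1 hint2, ← MeasureTheory.integral_const_mul]
    congr 1
    apply MeasureTheory.integral_congr_ae
    filter_upwards with x
    ring
  rw [split] at key
  have h0 : Complex.exp (c * 0) = 1 := by simp
  rw [h0] at key
  have hck : c = -(Complex.I * k) := by rw [hc]; ring
  linear_combination key - (∫ x in Set.Ici (0:ℝ), Complex.exp (c * ↑x) * f x) * hck

section
variable {T : ℝ} {Ψ : ℝ × ℝ → ℂ}

lemma sliceX (hC : ContDiffOn ℝ 1 Ψ (Set.Ici 0 ×ˢ Set.Icc 0 T)) {s : ℝ}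
    (hs : s ∈ Set.Icc 0 T) : ContDiffOn ℝ 1 (fun y : ℝ => Ψ (y, s)) (Set.Ici 0) :=
  hC.comp ((contDiff_id.prodMk contDiff_const).contDiffOn)
    (fun x hx => Set.mem_prod.mpr ⟨hx, hs⟩)

lemma sliceT (hC : ContDiffOn ℝ 1 Ψ (Set.Ici 0 ×ˢ Set.Icc 0 T)) {x : ℝ}
    (hx : x ∈ Set.Ici 0) : ContDiffOn ℝ 1 (fun r : ℝ => Ψ (x, r)) (Set.Icc 0 T) :=
  hC.comp ((contDiff_const.prodMk contDiff_id).contDiffOn)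
    (fun r hr => Set.mem_prod.mpr ⟨hx, hr⟩)

lemma hderX (hC : ContDiffOn ℝ 1 Ψ (Set.Ici 0 ×ˢ Set.Icc 0 T)) {s x : ℝ}
    (hs : s ∈ Set.Icc 0 T) (hx : x ∈ Set.Ici 0) :
    HasDerivWithinAt (fun y : ℝ => Ψ (y, s))
      (derivWithin (fun y : ℝ => Ψ (y, s)) (Set.Ici 0) x) (Set.Ici 0) x :=
  (((sliceX hC hs).differentiableOn one_ne_zero) x hx).hasDerivWithinAt

lemma hderT (hC : ContDiffOn ℝ 1 Ψ (Set.Ici 0 ×ˢ Set.Icc 0 T)) {s x : ℝ}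
    (hs : s ∈ Set.Icc 0 T) (hx : x ∈ Set.Ici 0) :
    HasDerivWithinAt (fun r : ℝ => Ψ (x, r))
      (derivWithin (fun r : ℝ => Ψ (x, r)) (Set.Icc 0 T) s) (Set.Icc 0 T) s :=
  (((sliceT hC hx).differentiableOn one_ne_zero) s hs).hasDerivWithinAt

lemma hderT_at (hC : ContDiffOn ℝ 1 Ψ (Set.Ici 0 ×ˢ Set.Icc 0 T)) {s x : ℝ}
    (hs : s ∈ Set.Ioo 0 T) (hx : x ∈ Set.Ici 0) :
    HasDerivAt (fun r : ℝ => Ψ (x, r))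
      (derivWithin (fun r : ℝ => Ψ (x, r)) (Set.Icc 0 T) s) s :=
  (hderT hC (Set.Ioo_subset_Icc_self hs) hx).hasDerivAt (Icc_mem_nhds hs.1 hs.2)

lemma Fmeas (k : ℝ) (hC : ContDiffOn ℝ 1 Ψ (Set.Ici 0 ×ˢ Set.Icc 0 T)) {s : ℝ}
    (hs : s ∈ Set.Icc 0 T) :
    AEStronglyMeasurable (fun x : ℝ => Complex.exp (-Complex.I * k * x) * Ψ (x, s))
      (volume.restrict (Set.Ici 0)) :=
  (((hEcont k).continuousOn.mul (sliceX hC hs).continuousOn)).aestronglyMeasurable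
    measurableSet_Ici

lemma param_deriv (hT : 0 < T) (k : ℝ)
    (hC : ContDiffOn ℝ 1 Ψ (Set.Ici 0 ×ˢ Set.Icc 0 T))
    (hint1 : ∀ s ∈ Set.Icc (0:ℝ) T, IntegrableOn (fun x => Ψ (x, s)) (Set.Ici 0))
    (hint3 : ∀ s ∈ Set.Icc (0:ℝ) T,
      IntegrableOn (fun x => derivWithin (fun r : ℝ => Ψ (x, r)) (Set.Icc 0 T) s) (Set.Ici 0))
    (g : ℝ → ℝ) (hg : IntegrableOn g (Set.Ici 0))
    (hgb : ∀ s ∈ Set.Icc (0:ℝ) T, ∀ x ∈ Set.Ici (0:ℝ),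
      ‖derivWithin (fun r : ℝ => Ψ (x, r)) (Set.Icc 0 T) s‖ ≤ g x)
    {s₀ : ℝ} (hs₀ : s₀ ∈ Set.Ioo 0 T) :
    HasDerivAt (fun s => ∫ x in Set.Ici (0:ℝ), Complex.exp (-Complex.I * k * x) * Ψ (x, s))
      (∫ x in Set.Ici (0:ℝ), Complex.exp (-Complex.I * k * x) *
        derivWithin (fun r : ℝ => Ψ (x, r)) (Set.Icc 0 T) s₀) s₀ := by
  set ε : ℝ := min s₀ (T - s₀) with hε
  have hεpos : 0 < ε := lt_min hs₀.1 (by linarith [hs₀.2])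
  have hball : Metric.ball s₀ ε ⊆ Set.Ioo 0 T := by
    intro s hs
    rw [Metric.mem_ball, Real.dist_eq, abs_lt] at hs
    constructor
    · have := min_le_left s₀ (T - s₀); linarith [hs.1]
    · have := min_le_right s₀ (T - s₀); linarith [hs.2]
  have hball' : Metric.ball s₀ ε ⊆ Set.Icc 0 T := hball.trans Set.Ioo_subset_Icc_self
  have hs₀' : s₀ ∈ Set.Icc 0 T := Set.Ioo_subset_Icc_self hs₀
  refine (_root_.hasDerivAt_integral_of_dominated_loc_of_deriv_le (𝕜 := ℝ)
    (μ := volume.restrict (Set.Ici 0))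
    (F := fun s x => Complex.exp (-Complex.I * k * x) * Ψ (x, s))
    (F' := fun s x => Complex.exp (-Complex.I * k * x) *
      derivWithin (fun r : ℝ => Ψ (x, r)) (Set.Icc 0 T) s)
    (bound := g) (Metric.ball_mem_nhds s₀ hεpos) ?_ ?_ ?_ ?_ ?_ ?_).2
  · filter_upwards [Icc_mem_nhds hs₀.1 hs₀.2] with s hs using Fmeas k hC hs
  · exact (hint1 s₀ hs₀').bdd_mul (hEcont k).aestronglyMeasurable
      (ae_of_all _ fun x => (hnorm1 k x).le)
  · exact (hEcont k).aestronglyMeasurable.mul (hint3 s₀ hs₀').aestronglyMeasurable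
  · filter_upwards [ae_restrict_mem measurableSet_Ici] with x hx
    intro s hs
    rw [norm_mul, hnorm1 k x, one_mul]
    exact hgb s (hball' hs) x hx
  · exact hg
  · filter_upwards [ae_restrict_mem measurableSet_Ici] with x hx
    intro s hs
    exact (hderT_at hC (hball hs) hx).const_mul _

lemma param_cont (hT : 0 < T) (k : ℝ)
    (hC : ContDiffOn ℝ 1 Ψ (Set.Ici 0 ×ˢ Set.Icc 0 T))
    (hint1 : ∀ s ∈ Set.Icc (0:ℝ) T, IntegrableOn (fun x => Ψ (x, s)) (Set.Ici 0))
    (g : ℝ → ℝ) (hg : IntegrableOn g (Set.Ici 0))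
    (hgb : ∀ s ∈ Set.Icc (0:ℝ) T, ∀ x ∈ Set.Ici (0:ℝ),
      ‖derivWithin (fun r : ℝ => Ψ (x, r)) (Set.Icc 0 T) s‖ ≤ g x) :
    ContinuousOn (fun s => ∫ x in Set.Ici (0:ℝ),
      Complex.exp (-Complex.I * k * x) * Ψ (x, s)) (Set.Icc 0 T) := by
  apply MeasureTheory.continuousOn_of_dominated
    (bound := fun x => ‖Ψ (x, 0)‖ + g x * T)
  · exact fun s hs => Fmeas k hC hs
  · intro s hs
    filter_upwards [ae_restrict_mem measurableSet_Ici] with x hx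
    rw [norm_mul, hnorm1 k x, one_mul]
    have h0T : (0:ℝ) ∈ Set.Icc 0 T := ⟨le_rfl, hT.le⟩
    have mvt : ‖Ψ (x, s) - Ψ (x, 0)‖ ≤ g x * ‖s - 0‖ :=
      Convex.norm_image_sub_le_of_norm_hasDerivWithin_le
        (fun r hr => hderT hC hr hx) (fun r hr => hgb r hr x hx) (convex_Icc 0 T) h0T hs
    have hgx : 0 ≤ g x := le_trans (norm_nonneg _) (hgb 0 h0T x hx)
    have h1 : ‖Ψ (x, s)‖ - ‖Ψ (x, 0)‖ ≤ ‖Ψ (x, s) - Ψ (x, 0)‖ := norm_sub_norm_le _ _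
    have h2 : ‖s - 0‖ ≤ T := by
      rw [sub_zero, Real.norm_eq_abs, abs_of_nonneg hs.1]; exact hs.2
    nlinarith [mvt, mul_le_mul_of_nonneg_left h2 hgx]
  · exact ((hint1 0 ⟨le_rfl, hT.le⟩).norm).add (hg.mul_const T)
  · filter_upwards [ae_restrict_mem measurableSet_Ici] with x hx
    exact continuousOn_const.mul (sliceT hC hx).continuousOn

end

/-- Global relation for a continuously differentiable, decaying solution of the massive
Dirac system on the positive half-line `[0,∞)` up to time `T`, for any branch `Ω` of
the dispersion relation `Ω² = -(k² + m²)`. -/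
theorem massive_dirac_global_relation_pos_halfline
    (T m : ℝ) (hT : 0 < T) (hm : 0 < m)
    (Ψ₁ Ψ₂ : ℝ × ℝ → ℂ)
    (hΨ₁ : ContDiffOn ℝ 1 Ψ₁ (Set.Ici 0 ×ˢ Set.Icc 0 T))
    (hΨ₂ : ContDiffOn ℝ 1 Ψ₂ (Set.Ici 0 ×ˢ Set.Icc 0 T))
    (pde₁ : ∀ x ∈ Set.Ici (0:ℝ), ∀ t ∈ Set.Icc (0:ℝ) T,
        Complex.I * derivWithin (fun s : ℝ => Ψ₁ (x, s)) (Set.Icc 0 T) t =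
          -Complex.I * derivWithin (fun y : ℝ => Ψ₁ (y, t)) (Set.Ici 0) x
            + m * Ψ₂ (x, t))
    (pde₂ : ∀ x ∈ Set.Ici (0:ℝ), ∀ t ∈ Set.Icc (0:ℝ) T,
        Complex.I * derivWithin (fun s : ℝ => Ψ₂ (x, s)) (Set.Icc 0 T) t =
          Complex.I * derivWithin (fun y : ℝ => Ψ₂ (y, t)) (Set.Ici 0) x
            + m * Ψ₁ (x, t))
    (hint : ∀ Ψ ∈ [Ψ₁, Ψ₂], ∀ s ∈ Set.Icc (0:ℝ) T,
        IntegrableOn (fun x => Ψ (x, s)) (Set.Ici 0) ∧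
        IntegrableOn (fun x => derivWithin (fun y : ℝ => Ψ (y, s)) (Set.Ici 0) x)
          (Set.Ici 0) ∧
        IntegrableOn (fun x => derivWithin (fun r : ℝ => Ψ (x, r)) (Set.Icc 0 T) s)
          (Set.Ici 0))
    (hdecay : ∀ Ψ ∈ [Ψ₁, Ψ₂], ∀ s ∈ Set.Icc (0:ℝ) T,
        Tendsto (fun x => Ψ (x, s)) atTop (nhds 0))
    (hdom : ∀ Ψ ∈ [Ψ₁, Ψ₂], ∃ g : ℝ → ℝ, IntegrableOn g (Set.Ici 0) ∧
        ∀ s ∈ Set.Icc (0:ℝ) T, ∀ x ∈ Set.Ici (0:ℝ),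
          ‖derivWithin (fun r : ℝ => Ψ (x, r)) (Set.Icc 0 T) s‖ ≤ g x) :
    ∀ (k : ℝ) (Ω : ℂ), Ω ^ 2 = -((k:ℂ) ^ 2 + (m:ℂ) ^ 2) → ∀ t ∈ Set.Icc (0:ℝ) T,
      (Complex.I * k - Ω) * Complex.exp (Ω * t) *
          (∫ x in Set.Ici (0:ℝ), Complex.exp (-Complex.I * k * x) * Ψ₂ (x, t))
      + Complex.I * m * (∫ s in (0:ℝ)..t, Complex.exp (Ω * s) * Ψ₁ (0, s))
      - Complex.I * m * Complex.exp (Ω * t) *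
          (∫ x in Set.Ici (0:ℝ), Complex.exp (-Complex.I * k * x) * Ψ₁ (x, t))
      + Complex.I * m *
          (∫ x in Set.Ici (0:ℝ), Complex.exp (-Complex.I * k * x) * Ψ₁ (x, 0))
      + (Ω - Complex.I * k) *
          (∫ x in Set.Ici (0:ℝ), Complex.exp (-Complex.I * k * x) * Ψ₂ (x, 0))
      + (Complex.I * k - Ω) * (∫ s in (0:ℝ)..t, Complex.exp (Ω * s) * Ψ₂ (0, s)) = 0 := by
  intro k Ω hΩ t htT
  have m1 : Ψ₁ ∈ [Ψ₁, Ψ₂] := by simp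
  have m2 : Ψ₂ ∈ [Ψ₁, Ψ₂] := by simp
  obtain ⟨g₁, hg₁, hgb₁⟩ := hdom Ψ₁ m1
  obtain ⟨g₂, hg₂, hgb₂⟩ := hdom Ψ₂ m2
  have hI : Complex.I * Complex.I = -1 := Complex.I_mul_I
  have hi₁ : ∀ s ∈ Set.Icc (0:ℝ) T, IntegrableOn (fun x => Ψ₁ (x, s)) (Set.Ici 0) :=
    fun s hs => (hint Ψ₁ m1 s hs).1
  have hx₁ := fun s hs => (hint Ψ₁ m1 s hs).2.1
  have ht₁ : ∀ s ∈ Set.Icc (0:ℝ) T,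
      IntegrableOn (fun x => derivWithin (fun r : ℝ => Ψ₁ (x, r)) (Set.Icc 0 T) s)
        (Set.Ici 0) := fun s hs => (hint Ψ₁ m1 s hs).2.2
  have hi₂ : ∀ s ∈ Set.Icc (0:ℝ) T, IntegrableOn (fun x => Ψ₂ (x, s)) (Set.Ici 0) :=
    fun s hs => (hint Ψ₂ m2 s hs).1
  have hx₂ := fun s hs => (hint Ψ₂ m2 s hs).2.1
  have ht₂ : ∀ s ∈ Set.Icc (0:ℝ) T,
      IntegrableOn (fun x => derivWithin (fun r : ℝ => Ψ₂ (x, r)) (Set.Icc 0 T) s)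
        (Set.Ici 0) := fun s hs => (hint Ψ₂ m2 s hs).2.2
  have hbd : ∀ f : ℝ → ℂ, IntegrableOn f (Set.Ici 0) →
      IntegrableOn (fun x : ℝ => Complex.exp (-Complex.I * k * x) * f x) (Set.Ici 0) :=
    fun f hf => hf.bdd_mul (hEcont k).aestronglyMeasurable (ae_of_all _ fun x => (hnorm1 k x).le)
  -- IBP identities
  have ibp₁ : ∀ s ∈ Set.Icc (0:ℝ) T,
      (∫ x in Set.Ici (0:ℝ), Complex.exp (-Complex.I * k * x) *
        derivWithin (fun y : ℝ => Ψ₁ (y, s)) (Set.Ici 0) x)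
      = -Ψ₁ (0, s) + Complex.I * k *
          ∫ x in Set.Ici (0:ℝ), Complex.exp (-Complex.I * k * x) * Ψ₁ (x, s) :=
    fun s hs => ibp_halfline k _ _ (fun x hx => hderX hΨ₁ hs hx)
      ((sliceX hΨ₁ hs).continuousOn_derivWithin (uniqueDiffOn_Ici 0) le_rfl)
      (hi₁ s hs) (hx₁ s hs) (hdecay Ψ₁ m1 s hs)
  have ibp₂ : ∀ s ∈ Set.Icc (0:ℝ) T,
      (∫ x in Set.Ici (0:ℝ), Complex.exp (-Complex.I * k * x) *
        derivWithin (fun y : ℝ => Ψ₂ (y, s)) (Set.Ici 0) x)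
      = -Ψ₂ (0, s) + Complex.I * k *
          ∫ x in Set.Ici (0:ℝ), Complex.exp (-Complex.I * k * x) * Ψ₂ (x, s) :=
    fun s hs => ibp_halfline k _ _ (fun x hx => hderX hΨ₂ hs hx)
      ((sliceX hΨ₂ hs).continuousOn_derivWithin (uniqueDiffOn_Ici 0) le_rfl)
      (hi₂ s hs) (hx₂ s hs) (hdecay Ψ₂ m2 s hs)
  -- time-derivative integrals via the PDE
  have hD₁ : ∀ s ∈ Set.Icc (0:ℝ) T,
      (∫ x in Set.Ici (0:ℝ), Complex.exp (-Complex.I * k * x) *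
        derivWithin (fun r : ℝ => Ψ₁ (x, r)) (Set.Icc 0 T) s)
      = Ψ₁ (0, s)
        - Complex.I * k * (∫ x in Set.Ici (0:ℝ), Complex.exp (-Complex.I * k * x) * Ψ₁ (x, s))
        - Complex.I * m * (∫ x in Set.Ici (0:ℝ), Complex.exp (-Complex.I * k * x) * Ψ₂ (x, s)) := by
    intro s hs
    have e1 : (∫ x in Set.Ici (0:ℝ), Complex.exp (-Complex.I * k * x) *
        derivWithin (fun r : ℝ => Ψ₁ (x, r)) (Set.Icc 0 T) s)
        = ∫ x in Set.Ici (0:ℝ),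
            ((-1:ℂ) * (Complex.exp (-Complex.I * k * x) *
              derivWithin (fun y : ℝ => Ψ₁ (y, s)) (Set.Ici 0) x)
            + (-(Complex.I * m)) * (Complex.exp (-Complex.I * k * x) * Ψ₂ (x, s))) := by
      apply MeasureTheory.integral_congr_ae
      filter_upwards [ae_restrict_mem measurableSet_Ici] with x hx
      have h := pde₁ x hx s hs
      have h2 : derivWithin (fun r : ℝ => Ψ₁ (x, r)) (Set.Icc 0 T) s
          = -derivWithin (fun y : ℝ => Ψ₁ (y, s)) (Set.Ici 0) x - Complex.I * m * Ψ₂ (x, s) := by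
        linear_combination (-Complex.I) * h +
          (derivWithin (fun r : ℝ => Ψ₁ (x, r)) (Set.Icc 0 T) s
            + derivWithin (fun y : ℝ => Ψ₁ (y, s)) (Set.Ici 0) x) * hI
      rw [h2]; ring
    rw [e1, MeasureTheory.integral_add ((hbd _ (hx₁ s hs)).const_mul _)
        ((hbd _ (hi₂ s hs)).const_mul _),
      MeasureTheory.integral_const_mul, MeasureTheory.integral_const_mul, ibp₁ s hs]
    ring
  have hD₂ : ∀ s ∈ Set.Icc (0:ℝ) T,
      (∫ x in Set.Ici (0:ℝ), Complex.exp (-Complex.I * k * x) *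
        derivWithin (fun r : ℝ => Ψ₂ (x, r)) (Set.Icc 0 T) s)
      = -Ψ₂ (0, s)
        + Complex.I * k * (∫ x in Set.Ici (0:ℝ), Complex.exp (-Complex.I * k * x) * Ψ₂ (x, s))
        - Complex.I * m * (∫ x in Set.Ici (0:ℝ), Complex.exp (-Complex.I * k * x) * Ψ₁ (x, s)) := by
    intro s hs
    have e1 : (∫ x in Set.Ici (0:ℝ), Complex.exp (-Complex.I * k * x) *
        derivWithin (fun r : ℝ => Ψ₂ (x, r)) (Set.Icc 0 T) s)
        = ∫ x in Set.Ici (0:ℝ),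
            ((1:ℂ) * (Complex.exp (-Complex.I * k * x) *
              derivWithin (fun y : ℝ => Ψ₂ (y, s)) (Set.Ici 0) x)
            + (-(Complex.I * m)) * (Complex.exp (-Complex.I * k * x) * Ψ₁ (x, s))) := by
      apply MeasureTheory.integral_congr_ae
      filter_upwards [ae_restrict_mem measurableSet_Ici] with x hx
      have h := pde₂ x hx s hs
      have h2 : derivWithin (fun r : ℝ => Ψ₂ (x, r)) (Set.Icc 0 T) s
          = derivWithin (fun y : ℝ => Ψ₂ (y, s)) (Set.Ici 0) x - Complex.I * m * Ψ₁ (x, s) := by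
        linear_combination (-Complex.I) * h +
          (derivWithin (fun r : ℝ => Ψ₂ (x, r)) (Set.Icc 0 T) s
            - derivWithin (fun y : ℝ => Ψ₂ (y, s)) (Set.Ici 0) x) * hI
      rw [h2]; ring
    rw [e1, MeasureTheory.integral_add ((hbd _ (hx₂ s hs)).const_mul _)
        ((hbd _ (hi₁ s hs)).const_mul _),
      MeasureTheory.integral_const_mul, MeasureTheory.integral_const_mul, ibp₂ s hs]
    ring
  -- derivative of the combined function
  have hG : ∀ s ∈ Set.Ioo (0:ℝ) t, HasDerivAt
      (fun r : ℝ => Complex.exp (Ω * r) *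
        ((Complex.I * k - Ω) *
            (∫ x in Set.Ici (0:ℝ), Complex.exp (-Complex.I * k * x) * Ψ₂ (x, r))
          - Complex.I * m *
            (∫ x in Set.Ici (0:ℝ), Complex.exp (-Complex.I * k * x) * Ψ₁ (x, r))))
      (Complex.exp (Ω * s) *
        (-(Complex.I * k - Ω) * Ψ₂ (0, s) - Complex.I * m * Ψ₁ (0, s))) s := by
    intro s hs
    have hs' : s ∈ Set.Ioo 0 T := ⟨hs.1, lt_of_lt_of_le hs.2 htT.2⟩
    have hsI : s ∈ Set.Icc 0 T := Set.Ioo_subset_Icc_self hs'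
    have d1 := param_deriv hT k hΨ₁ hi₁ ht₁ g₁ hg₁ hgb₁ hs'
    have d2 := param_deriv hT k hΨ₂ hi₂ ht₂ g₂ hg₂ hgb₂ hs'
    have dG := (hasDerivAt_cexp_mul Ω s).mul
      ((d2.const_mul (Complex.I * k - Ω)).sub (d1.const_mul (Complex.I * m)))
    refine dG.congr_deriv (Eq.symm ?_)
    rw [Pi.sub_apply, hD₁ s hsI, hD₂ s hsI]
    linear_combination
      (Complex.exp (Ω * s) *
          (∫ x in Set.Ici (0:ℝ), Complex.exp (-Complex.I * k * x) * Ψ₂ (x, s))) * hΩ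
      - (Complex.exp (Ω * s) *
          (∫ x in Set.Ici (0:ℝ), Complex.exp (-Complex.I * k * x) * Ψ₂ (x, s))
          * ((k:ℂ)^2 + (m:ℂ)^2)) * hI
  -- continuity of the combined function
  have ce : ContinuousOn (fun r : ℝ => Complex.exp (Ω * r)) (Set.Icc 0 t) :=
    (Complex.continuous_exp.comp (continuous_const.mul Complex.continuous_ofReal)).continuousOn
  have hsub : Set.Icc (0:ℝ) t ⊆ Set.Icc 0 T := Set.Icc_subset_Icc_right htT.2
  have hGc : ContinuousOn
      (fun r : ℝ => Complex.exp (Ω * r) *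
        ((Complex.I * k - Ω) *
            (∫ x in Set.Ici (0:ℝ), Complex.exp (-Complex.I * k * x) * Ψ₂ (x, r))
          - Complex.I * m *
            (∫ x in Set.Ici (0:ℝ), Complex.exp (-Complex.I * k * x) * Ψ₁ (x, r))))
      (Set.Icc 0 t) := by
    have c1 := (param_cont hT k hΨ₁ hi₁ g₁ hg₁ hgb₁).mono hsub
    have c2 := (param_cont hT k hΨ₂ hi₂ g₂ hg₂ hgb₂).mono hsub
    exact ce.mul ((continuousOn_const.mul c2).sub (continuousOn_const.mul c1))
  have hB₁ : ContinuousOn (fun s : ℝ => Ψ₁ (0, s)) (Set.Icc 0 T) :=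
    (sliceT hΨ₁ Set.self_mem_Ici).continuousOn
  have hB₂ : ContinuousOn (fun s : ℝ => Ψ₂ (0, s)) (Set.Icc 0 T) :=
    (sliceT hΨ₂ Set.self_mem_Ici).continuousOn
  have hgc : ContinuousOn
      (fun s : ℝ => Complex.exp (Ω * s) *
        (-(Complex.I * k - Ω) * Ψ₂ (0, s) - Complex.I * m * Ψ₁ (0, s))) (Set.Icc 0 t) :=
    ce.mul ((continuousOn_const.mul (hB₂.mono hsub)).sub
      (continuousOn_const.mul (hB₁.mono hsub)))
  -- FTC
  have hFTC : (∫ s in (0:ℝ)..t, Complex.exp (Ω * s) *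
        (-(Complex.I * k - Ω) * Ψ₂ (0, s) - Complex.I * m * Ψ₁ (0, s)))
      = Complex.exp (Ω * t) *
          ((Complex.I * k - Ω) *
              (∫ x in Set.Ici (0:ℝ), Complex.exp (-Complex.I * k * x) * Ψ₂ (x, t))
            - Complex.I * m *
              (∫ x in Set.Ici (0:ℝ), Complex.exp (-Complex.I * k * x) * Ψ₁ (x, t)))
        - Complex.exp (Ω * (0:ℝ)) *
          ((Complex.I * k - Ω) *
              (∫ x in Set.Ici (0:ℝ), Complex.exp (-Complex.I * k * x) * Ψ₂ (x, 0))
            - Complex.I * m *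
              (∫ x in Set.Ici (0:ℝ), Complex.exp (-Complex.I * k * x) * Ψ₁ (x, 0))) :=
    intervalIntegral.integral_eq_sub_of_hasDeriv_right_of_le htT.1 hGc
      (fun s hs => (hG s hs).hasDerivWithinAt)
      (hgc.intervalIntegrable_of_Icc htT.1)
  -- split the boundary integral
  have hii₁ : IntervalIntegrable (fun s : ℝ => Complex.exp (Ω * s) * Ψ₁ (0, s)) volume 0 t :=
    (ce.mul (hB₁.mono hsub)).intervalIntegrable_of_Icc htT.1
  have hii₂ : IntervalIntegrable (fun s : ℝ => Complex.exp (Ω * s) * Ψ₂ (0, s)) volume 0 t :=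
    (ce.mul (hB₂.mono hsub)).intervalIntegrable_of_Icc htT.1
  have hsplit : (∫ s in (0:ℝ)..t, Complex.exp (Ω * s) *
        (-(Complex.I * k - Ω) * Ψ₂ (0, s) - Complex.I * m * Ψ₁ (0, s)))
      = -(Complex.I * k - Ω) * (∫ s in (0:ℝ)..t, Complex.exp (Ω * s) * Ψ₂ (0, s))
        - Complex.I * m * (∫ s in (0:ℝ)..t, Complex.exp (Ω * s) * Ψ₁ (0, s)) := by
    rw [← intervalIntegral.integral_const_mul, ← intervalIntegral.integral_const_mul,
      ← intervalIntegral.integral_sub (hii₂.const_mul _) (hii₁.const_mul _)]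
    apply intervalIntegral.integral_congr
    intro s _
    ring
  have he0 : Complex.exp (Ω * ((0:ℝ):ℂ)) = 1 := by simp
  linear_combination hsplit - hFTC +
    ((Complex.I * k - Ω) *
        (∫ x in Set.Ici (0:ℝ), Complex.exp (-Complex.I * k * x) * Ψ₂ (x, 0))
      - Complex.I * m *
        (∫ x in Set.Ici (0:ℝ), Complex.exp (-Complex.I * k * x) * Ψ₁ (x, 0))) * he0
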